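/- Let E/F be a quadratic field extension and c ≥ 1 an integer. If E/F is unramified, then GL₂(𝔬) = K₀(𝔭^c)·ι₀(𝒪^×). If E/F is ramified, then GL₂(𝔬) = K₀(𝔭^c)·ι₀(𝒪^×) ⊔ K₀(𝔭^c)·n₋(u₀)·ι₀(𝒪^×), a disjoint union, where u₀ ∈ 𝔬 ∖ 𝔭 satisfies u₀ ≡ β (mod 𝒫) and 𝐚 − 𝐛u₀ + u₀² ∈ 𝔭 ∖ 𝔭². In both cases the decomposition is independent of c ≥ 1. -/

import Mathlib

/-! `F` a nonarchimedean local field, modelled by a field `F` with valuation ring `o`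
(a DVR) and uniformizer `ϖ ∈ o`; `n₋(x) = [[1,0],[x,1]]`,
`K₀(𝔭^c) = {[[a,b],[c,d]] ∈ GL₂(𝔬) : c ∈ 𝔭^c}`.  `E/F` a quadratic field extension
with ring of integers the valuation subring `O` (maximal ideal `𝒫` = nonunits of
`𝒪`); `β ∈ 𝒪 ∖ 𝔬` with `𝒪 = 𝔬 + β𝔬`, `𝐚 := Nr(β) ∈ 𝔬^×`, `𝐛 := Tr(β)` (so
`β² − 𝐛β + 𝐚 = 0`); `ι₀ : E → M₂(F)` is determined by `x·(β,1) = (β,1)·ι₀(x)`, and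
`ι₀(𝒪^×) ⊆ GL₂(𝔬)`.  `E/F` is unramified when `ϖ` stays irreducible in `𝒪`, and
ramified when `ϖ` becomes associated to `ϖ_E²` for a uniformizer `ϖ_E` of `𝒪`. -/

/-- `n₋(x) = [[1,0],[x,1]]`. -/
def nmM {F : Type*} [Field F] (x : F) : Matrix (Fin 2) (Fin 2) F := !![1, 0; x, 1]

/-- `GL₂(𝔬)`. -/
def GLo {F : Type*} [Field F] (o : ValuationSubring F) :
    Set (Matrix (Fin 2) (Fin 2) F) :=
  {g | (∀ i j, g i j ∈ o) ∧
    ∃ h : Matrix (Fin 2) (Fin 2) F, (∀ i j, h i j ∈ o) ∧ g * h = 1 ∧ h * g = 1}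

/-- `K₀(𝔭^c)`: elements of `GL₂(𝔬)` whose lower-left entry lies in `𝔭^c`. -/
def K0 {F : Type*} [Field F] (o : ValuationSubring F) (ϖ : F) (c : ℕ) :
    Set (Matrix (Fin 2) (Fin 2) F) :=
  {g | g ∈ GLo o ∧ ∃ d ∈ o, g 1 0 = ϖ ^ c * d}

/-- The unit group `𝒪^×` of the ring of integers of `E` (as a subset of `E`). -/
def Ox {E : Type*} [Field E] (O : ValuationSubring E) : Set E :=
  {z | z ∈ O ∧ ∃ w ∈ O, z * w = 1}

section Aux
variable {F E : Type*} [Field F] [Field E] [Algebra F E]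

/-- `s + tβ` as an element of `E`. -/
def repE (F : Type*) {E : Type*} [Field F] [Field E] [Algebra F E] (β : E) (s t : F) : E :=
  algebraMap F E s + algebraMap F E t * β

variable (β : E) (a b : F)

lemma rep_mul (hmin : β ^ 2 - algebraMap F E b * β + algebraMap F E a = 0) (s t p q : F) :
    repE F β s t * repE F β p q = repE F β (s*p - a*t*q) (s*q + p*t + b*t*q) := by
  simp only [repE, map_add, map_mul, map_sub]
  linear_combination (algebraMap F E t * algebraMap F E q) * hmin

lemma rep_inj (hβr : ∀ r : F, algebraMap F E r ≠ β) {s t p q : F}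
    (h : repE F β s t = repE F β p q) : s = p ∧ t = q := by
  have hinj : Function.Injective (algebraMap F E) := (algebraMap F E).injective
  by_cases htq : t = q
  · subst htq
    simp only [repE, add_left_cancel_iff] at h
    exact ⟨hinj (by simpa using h), rfl⟩
  · exfalso
    apply hβr ((s - p) / (q - t))
    have h2 : algebraMap F E (s - p) = algebraMap F E (q - t) * β := by
      simp only [repE] at h
      simp only [map_sub]
      ring_nf
      linear_combination h
    have hqt : algebraMap F E (q - t) ≠ 0 := by
      simp only [ne_eq, map_eq_zero, sub_eq_zero]
      exact fun hh => htq hh.symm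
    rw [map_div₀, h2, mul_comm, mul_div_assoc, div_self hqt, mul_one]

/-- Norm form of the quadratic algebra. -/
def NfF (a b s t : F) : F := s^2 + b*s*t + a*t^2

lemma NfF_mul (s t p q : F) :
    NfF a b (s*p - a*t*q) (s*q + p*t + b*t*q) = NfF a b s t * NfF a b p q := by
  unfold NfF; ring

lemma rep_norm (hmin : β ^ 2 - algebraMap F E b * β + algebraMap F E a = 0) (s t : F) :
    repE F β s t * repE F β (s + t*b) (-t) = algebraMap F E (NfF a b s t) := by
  rw [rep_mul β a b hmin]
  have h1 : s*(s + t*b) - a*t*(-t) = NfF a b s t := by unfold NfF; ring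
  have h2 : s*(-t) + (s + t*b)*t + b*t*(-t) = 0 := by ring
  rw [h1, h2]
  simp [repE]


lemma rep_coords_mem (o : ValuationSubring F) (O : ValuationSubring E)
    (hOgen : ∀ z ∈ O, ∃ x y : F, x ∈ o ∧ y ∈ o ∧
      z = algebraMap F E x + algebraMap F E y * β)
    (hβr : ∀ r : F, algebraMap F E r ≠ β)
    {s t : F} (h : repE F β s t ∈ O) : s ∈ o ∧ t ∈ o := by
  obtain ⟨x, y, hx, hy, hz⟩ := hOgen _ h
  obtain ⟨h1, h2⟩ := rep_inj β hβr (s := s) (t := t) (p := x) (q := y) hz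
  exact ⟨h1 ▸ hx, h2 ▸ hy⟩

lemma crit_of_mem (o : ValuationSubring F) (O : ValuationSubring E)
    (hcomp : ∀ x : F, x ∈ o ↔ algebraMap F E x ∈ O)
    (hOgen : ∀ z ∈ O, ∃ x y : F, x ∈ o ∧ y ∈ o ∧
      z = algebraMap F E x + algebraMap F E y * β)
    (hβr : ∀ r : F, algebraMap F E r ≠ β) (hβO : β ∈ O) (hbo : b ∈ o)
    (hmin : β ^ 2 - algebraMap F E b * β + algebraMap F E a = 0)
    {s t : F} (hz : repE F β s t ∈ O)
    {m : F} (hm : m ∈ o) (hNm : NfF a b s t * m = 1) : repE F β s t ∈ Ox O := by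
  obtain ⟨hs, ht⟩ := rep_coords_mem β o O hOgen hβr hz
  refine ⟨hz, repE F β (s + t*b) (-t) * algebraMap F E m, ?_, ?_⟩
  · refine mul_mem (add_mem ((hcomp _).1 (add_mem hs (mul_mem ht hbo)))
      (mul_mem ((hcomp _).1 (neg_mem ht)) hβO)) ((hcomp _).1 hm)
  · rw [← mul_assoc, rep_norm β a b hmin, ← map_mul, hNm, map_one]


lemma rep_congr {s t p q : F} (h1 : s = p) (h2 : t = q) :
    repE F β s t = repE F β p q := by rw [h1, h2]

lemma crit_of (o : ValuationSubring F) (O : ValuationSubring E)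
    (hcomp : ∀ x : F, x ∈ o ↔ algebraMap F E x ∈ O)
    (hOgen : ∀ z ∈ O, ∃ x y : F, x ∈ o ∧ y ∈ o ∧
      z = algebraMap F E x + algebraMap F E y * β)
    (hβr : ∀ r : F, algebraMap F E r ≠ β) (hβO : β ∈ O)
    (hbo : b ∈ o)
    (hmin : β ^ 2 - algebraMap F E b * β + algebraMap F E a = 0)
    {s t : F} {m : F} (hm : m ∈ o) (hN : NfF a b s t ∈ o)
    (hNm : NfF a b s t * m = 1) : repE F β s t ∈ Ox O := by
  have hzx : repE F β s t * (repE F β (s + t*b) (-t) * algebraMap F E m) = 1 := by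
    rw [← mul_assoc, rep_norm β a b hmin, ← map_mul, hNm, map_one]
  have hzne : repE F β s t ≠ 0 := by
    intro h0; rw [h0, zero_mul] at hzx; exact zero_ne_one hzx
  rcases O.mem_or_inv_mem (repE F β s t) with hz | hz
  · exact crit_of_mem β a b o O hcomp hOgen hβr hβO hbo hmin hz hm hNm
  · have hinv : (repE F β s t)⁻¹ = repE F β ((s + t*b)*m) (m*(-t)) := by
      rw [show (repE F β s t)⁻¹ = repE F β (s + t*b) (-t) * algebraMap F E m from
        (eq_inv_of_mul_eq_one_right hzx).symm,
        show algebraMap F E m = repE F β m 0 from by simp [repE],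
        rep_mul β a b hmin]
      exact rep_congr β (by ring) (by ring)
    have hmem : repE F β ((s + t*b)*m) (m*(-t)) ∈ O := hinv ▸ hz
    have hinOx : repE F β ((s + t*b)*m) (m*(-t)) ∈ Ox O := by
      refine crit_of_mem β a b o O hcomp hOgen hβr hβO hbo hmin hmem (m := NfF a b s t) hN ?_
      have hN2 : NfF a b ((s + t*b)*m) (m*(-t)) = m^2 * NfF a b s t := by
        unfold NfF; ring
      rw [hN2]; linear_combination (m * NfF a b s t + 1) * hNm
    obtain ⟨_, w, hw, hww⟩ := hinOx
    rw [← hinv] at hww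
    have hzw : repE F β s t = w := by
      have := congrArg (fun x => repE F β s t * x) hww
      simpa [← mul_assoc, mul_inv_cancel₀ hzne] using this.symm
    exact crit_of_mem β a b o O hcomp hOgen hβr hβO hbo hmin (hzw ▸ hw) hm hNm

lemma crit_to (o : ValuationSubring F) (O : ValuationSubring E)
    (hOgen : ∀ z ∈ O, ∃ x y : F, x ∈ o ∧ y ∈ o ∧
      z = algebraMap F E x + algebraMap F E y * β)
    (hβr : ∀ r : F, algebraMap F E r ≠ β)
    (hao : a ∈ o) (hbo : b ∈ o)
    (hmin : β ^ 2 - algebraMap F E b * β + algebraMap F E a = 0)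
    {s t : F} (h : repE F β s t ∈ Ox O) :
    s ∈ o ∧ t ∈ o ∧ ∃ m ∈ o, NfF a b s t * m = 1 := by
  obtain ⟨hz, w, hw, hww⟩ := h
  obtain ⟨hs, ht⟩ := rep_coords_mem β o O hOgen hβr hz
  obtain ⟨p, q, hp, hq, hwpq⟩ := hOgen _ hw
  rw [show algebraMap F E p + algebraMap F E q * β = repE F β p q from rfl] at hwpq
  subst hwpq
  rw [rep_mul β a b hmin] at hww
  have hone : (1 : E) = repE F β 1 0 := by simp [repE]
  rw [hone] at hww
  obtain ⟨e1, e2⟩ := rep_inj β hβr hww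
  refine ⟨hs, ht, NfF a b p q, ?_, ?_⟩
  · unfold NfF
    exact add_mem (add_mem (pow_mem hp 2) (mul_mem (mul_mem hbo hp) hq))
      (mul_mem hao (pow_mem hq 2))
  · rw [← NfF_mul a b s t p q]
    have : NfF a b (s*p - a*t*q) (s*q + p*t + b*t*q) = NfF a b 1 0 := by rw [e1, e2]
    rw [this]; unfold NfF; ring

end Aux

section Aux2

lemma aux_nonunit_dvd {R : Type*} [CommRing R] [IsDomain R] [IsDiscreteValuationRing R]
    {p x : R} (hp : Irreducible p) (hx : ¬ IsUnit x) : p ∣ x := by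
  have : x ∈ IsLocalRing.maximalIdeal R := by
    simpa [IsLocalRing.mem_maximalIdeal, mem_nonunits_iff] using hx
  rwa [hp.maximalIdeal_eq, Ideal.mem_span_singleton] at this

variable {K : Type*} [Field K] (o : ValuationSubring K)

lemma mem_Ox_iff {x : K} (hx : x ∈ o) : x ∈ Ox o ↔ IsUnit (⟨x, hx⟩ : o) := by
  constructor
  · rintro ⟨-, y, hy, hxy⟩
    exact IsUnit.of_mul_eq_one ⟨y, hy⟩ (Subtype.ext (by simpa using hxy))
  · rintro h
    obtain ⟨c, hc⟩ := isUnit_iff_exists_inv.1 h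
    exact ⟨hx, c, c.2, by simpa using congrArg Subtype.val hc⟩

lemma nonunit_dvd [IsDiscreteValuationRing o] {p : K} (hp : p ∈ o)
    (hirr : Irreducible (⟨p, hp⟩ : o)) {x : K} (hx : x ∈ o) (hnx : x ∉ Ox o) :
    ∃ r ∈ o, x = p * r := by
  obtain ⟨r, hr⟩ := aux_nonunit_dvd hirr (fun h => hnx ((mem_Ox_iff o hx).2 h))
  exact ⟨r, r.2, by simpa using congrArg Subtype.val hr⟩

lemma pmul_not_unit [IsDiscreteValuationRing o] {p : K} (hp : p ∈ o)
    (hirr : Irreducible (⟨p, hp⟩ : o)) {r : K} (hr : r ∈ o) : p * r ∉ Ox o := by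
  rintro ⟨hmem, y, hy, hxy⟩
  refine hirr.not_isUnit (IsUnit.of_mul_eq_one ⟨r * y, mul_mem hr hy⟩ (Subtype.ext ?_))
  simpa [mul_assoc] using hxy

lemma unit_add_nonunit [IsDiscreteValuationRing o] {x y : K} (hx : x ∈ Ox o)
    (hy : y ∈ o) (hny : y ∉ Ox o) : x + y ∈ Ox o := by
  have hxo : x ∈ o := hx.1
  rw [mem_Ox_iff o hxo] at hx
  rw [mem_Ox_iff o (add_mem hxo hy)]
  by_contra h
  have h1 : (⟨x + y, add_mem hxo hy⟩ : o) ∈ IsLocalRing.maximalIdeal o := by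
    simpa [IsLocalRing.mem_maximalIdeal, mem_nonunits_iff] using h
  have h2 : (⟨y, hy⟩ : o) ∈ IsLocalRing.maximalIdeal o := by
    simp only [IsLocalRing.mem_maximalIdeal, mem_nonunits_iff]
    exact fun hu => hny ((mem_Ox_iff o hy).2 hu)
  have h3 : (⟨x, hxo⟩ : o) ∈ IsLocalRing.maximalIdeal o := by
    have h4 := Ideal.sub_mem _ h1 h2
    have h5 : (⟨x + y, add_mem hxo hy⟩ : o) - ⟨y, hy⟩ = ⟨x, hxo⟩ := Subtype.ext (by simp)
    rwa [h5] at h4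
  rw [IsLocalRing.mem_maximalIdeal, mem_nonunits_iff] at h3
  exact h3 hx

end Aux2

section Aux3
variable {K : Type*} [Field K] (o : ValuationSubring K)

lemma mul_entry (A B : Matrix (Fin 2) (Fin 2) K) (i j : Fin 2) :
    (A * B) i j = A i 0 * B 0 j + A i 1 * B 1 j := by
  simp [Matrix.mul_apply, Fin.sum_univ_two]

lemma GLo_mul {A B : Matrix (Fin 2) (Fin 2) K} (hA : A ∈ GLo o) (hB : B ∈ GLo o) :
    A * B ∈ GLo o := by
  obtain ⟨hAe, A', hA'e, hAA', hA'A⟩ := hA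
  obtain ⟨hBe, B', hB'e, hBB', hB'B⟩ := hB
  refine ⟨fun i j => ?_, B' * A', fun i j => ?_, ?_, ?_⟩
  · rw [mul_entry]; exact add_mem (mul_mem (hAe i 0) (hBe 0 j)) (mul_mem (hAe i 1) (hBe 1 j))
  · rw [mul_entry]; exact add_mem (mul_mem (hB'e i 0) (hA'e 0 j)) (mul_mem (hB'e i 1) (hA'e 1 j))
  · rw [mul_assoc, ← mul_assoc B, hBB', one_mul, hAA']
  · rw [mul_assoc, ← mul_assoc A', hA'A, one_mul, hB'B]

lemma GLo_det {A : Matrix (Fin 2) (Fin 2) K} (hA : A ∈ GLo o) :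
    A 0 0 * A 1 1 - A 0 1 * A 1 0 ∈ Ox o := by
  obtain ⟨hAe, A', hA'e, hAA', hA'A⟩ := hA
  refine ⟨sub_mem (mul_mem (hAe 0 0) (hAe 1 1)) (mul_mem (hAe 0 1) (hAe 1 0)),
    A' 0 0 * A' 1 1 - A' 0 1 * A' 1 0,
    sub_mem (mul_mem (hA'e 0 0) (hA'e 1 1)) (mul_mem (hA'e 0 1) (hA'e 1 0)), ?_⟩
  rw [← Matrix.det_fin_two, ← Matrix.det_fin_two, ← Matrix.det_mul, hAA', Matrix.det_one]

lemma nmM_GLo {x : K} (hx : x ∈ o) : nmM x ∈ GLo o := by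
  refine ⟨fun i j => ?_, nmM (-x), fun i j => ?_, ?_, ?_⟩
  · fin_cases i <;> fin_cases j <;> simp [nmM] <;> first | exact o.one_mem | exact o.zero_mem | exact hx
  · fin_cases i <;> fin_cases j <;> simp [nmM] <;> first | exact o.one_mem | exact o.zero_mem | exact hx | exact neg_mem hx
  · ext i j; fin_cases i <;> fin_cases j <;> simp [nmM, mul_entry, Matrix.one_apply]
  · ext i j; fin_cases i <;> fin_cases j <;> simp [nmM, mul_entry, Matrix.one_apply]

end Aux3

section Aux4
variable {K : Type*} [Field K] (o : ValuationSubring K)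

lemma Ox_mul {x y : K} (hx : x ∈ Ox o) (hy : y ∈ Ox o) : x * y ∈ Ox o := by
  obtain ⟨hx1, x', hx', hxx⟩ := hx
  obtain ⟨hy1, y', hy', hyy⟩ := hy
  exact ⟨mul_mem hx1 hy1, x' * y', mul_mem hx' hy', by
    rw [show x * y * (x' * y') = (x * x') * (y * y') by ring, hxx, hyy, one_mul]⟩

lemma Ox_of_mul_right {x y : K} (hx : x ∈ o) (hy : y ∈ o) (h : x * y ∈ Ox o) :
    y ∈ Ox o := by
  obtain ⟨-, w, hw, hww⟩ := h
  exact ⟨hy, x * w, mul_mem hx hw, by rw [← hww]; ring⟩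

lemma Ox_neg {x : K} (hx : x ∈ Ox o) : -x ∈ Ox o := by
  obtain ⟨hx1, x', hx', hxx⟩ := hx
  exact ⟨neg_mem hx1, -x', neg_mem hx', by rw [neg_mul_neg, hxx]⟩

lemma nonunit_sub [IsDiscreteValuationRing o] {x y : K} (hx : x ∈ o) (hy : y ∈ o)
    (hnx : x ∉ Ox o) (hny : y ∉ Ox o) : x - y ∉ Ox o := by
  intro h
  have h1 : (⟨x, hx⟩ : o) ∈ IsLocalRing.maximalIdeal o := by
    simp only [IsLocalRing.mem_maximalIdeal, mem_nonunits_iff]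
    exact fun hu => hnx ((mem_Ox_iff o hx).2 hu)
  have h2 : (⟨y, hy⟩ : o) ∈ IsLocalRing.maximalIdeal o := by
    simp only [IsLocalRing.mem_maximalIdeal, mem_nonunits_iff]
    exact fun hu => hny ((mem_Ox_iff o hy).2 hu)
  have h3 := Ideal.sub_mem _ h1 h2
  have h4 : (⟨x, hx⟩ : o) - ⟨y, hy⟩ = ⟨x - y, sub_mem hx hy⟩ := Subtype.ext (by simp)
  rw [h4, IsLocalRing.mem_maximalIdeal, mem_nonunits_iff] at h3
  exact h3 ((mem_Ox_iff o (sub_mem hx hy)).1 h)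

lemma NfF_mem {a b s t : K} (hao : a ∈ o) (hbo : b ∈ o) (hs : s ∈ o) (ht : t ∈ o) :
    NfF a b s t ∈ o := by
  unfold NfF
  exact add_mem (add_mem (pow_mem hs 2) (mul_mem (mul_mem hbo hs) ht))
    (mul_mem hao (pow_mem ht 2))

end Aux4

lemma NfF_conj {K : Type*} [Field K] (a b s t : K) :
    NfF a b (s + t*b) (-t) = NfF a b s t := by unfold NfF; ring

lemma NfF_mul' {K : Type*} [Field K] (a b x y p q : K) (ha : a ≠ 0) :
    NfF a b (x*q + y*p) (-((x*(p + q*b) - y*q*a) * a⁻¹)) =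
      NfF a b y (-(x*a⁻¹)) * NfF a b p q := by
  unfold NfF; field_simp; ring

lemma nmM_inv {K : Type*} [Field K] (u : K) : nmM (-u) * nmM u = 1 := by
  ext i j; fin_cases i <;> fin_cases j <;> simp [nmM, mul_entry, Matrix.one_apply]


/-- Let `c ≥ 1`.  If `E/F` is unramified then
`GL₂(𝔬) = K₀(𝔭^c)·ι₀(𝒪^×)`.  If `E/F` is ramified then
`GL₂(𝔬) = K₀(𝔭^c)·ι₀(𝒪^×) ⊔ K₀(𝔭^c)·n₋(u₀)·ι₀(𝒪^×)` (a disjoint union), where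
`u₀ ∈ 𝔬 ∖ 𝔭` satisfies `u₀ ≡ β (mod 𝒫)` and `𝐚 − 𝐛u₀ + u₀² ∈ 𝔭 ∖ 𝔭²`.
In both cases the decomposition is independent of `c ≥ 1`. -/
theorem stmt_15 {F E : Type*} [Field F] [Field E] [Algebra F E]
    (o : ValuationSubring F) [IsDiscreteValuationRing o]
    (O : ValuationSubring E) [IsDiscreteValuationRing O]
    (hcomp : ∀ x : F, x ∈ o ↔ algebraMap F E x ∈ O)
    (ϖ : F) (hϖo : ϖ ∈ o) (hϖ : Irreducible (⟨ϖ, hϖo⟩ : o))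
    (β : E) (hβO : β ∈ O) (hβno : ¬ ∃ x ∈ o, β = algebraMap F E x)
    (hOgen : ∀ z ∈ O, ∃ x y : F, x ∈ o ∧ y ∈ o ∧
      z = algebraMap F E x + algebraMap F E y * β)
    (hquad : ∀ z : E, ∃ s t : F, z = algebraMap F E s + algebraMap F E t * β)
    (a b : F) (hao : a ∈ o) (hbo : b ∈ o) (hau : a⁻¹ ∈ o) (hane : a ≠ 0)
    (hmin : β ^ 2 - algebraMap F E b * β + algebraMap F E a = 0)
    (ι₀ : E →+* Matrix (Fin 2) (Fin 2) F)
    (hι₀ : ∀ x : E, ∀ j : Fin 2,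
      x * (![β, 1] j) = ∑ i : Fin 2, (![β, 1] i) * algebraMap F E (ι₀ x i j))
    (c : ℕ) (hc : 1 ≤ c) :
    -- unramified case
    (Irreducible (⟨algebraMap F E ϖ, (hcomp ϖ).1 hϖo⟩ : O) →
      ∀ g : Matrix (Fin 2) (Fin 2) F,
        g ∈ GLo o ↔ ∃ k ∈ K0 o ϖ c, ∃ t ∈ Ox O, g = k * ι₀ t) ∧
    -- ramified case
    (∀ ϖE : O, Irreducible ϖE →
      Associated (⟨algebraMap F E ϖ, (hcomp ϖ).1 hϖo⟩ : O) (ϖE ^ 2) →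
      ∀ u₀ : F, u₀ ∈ o → u₀⁻¹ ∈ o → u₀ ≠ 0 →
        (β - algebraMap F E u₀ ∈ O ∧
          ¬ ∃ w ∈ O, (β - algebraMap F E u₀) * w = 1) →
        (∃ d ∈ o, a - b * u₀ + u₀ ^ 2 = ϖ * d) →
        (¬ ∃ d ∈ o, a - b * u₀ + u₀ ^ 2 = ϖ ^ 2 * d) →
        ((∀ g : Matrix (Fin 2) (Fin 2) F,
            g ∈ GLo o ↔
              ((∃ k ∈ K0 o ϖ c, ∃ t ∈ Ox O, g = k * ι₀ t) ∨
                (∃ k ∈ K0 o ϖ c, ∃ t ∈ Ox O, g = k * nmM u₀ * ι₀ t))) ∧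
          Disjoint {g : Matrix (Fin 2) (Fin 2) F | ∃ k ∈ K0 o ϖ c, ∃ t ∈ Ox O,
              g = k * ι₀ t}
            {g : Matrix (Fin 2) (Fin 2) F | ∃ k ∈ K0 o ϖ c, ∃ t ∈ Ox O,
              g = k * nmM u₀ * ι₀ t})) := by
  have hβr : ∀ r : F, algebraMap F E r ≠ β := fun r hr =>
    hβno ⟨r, (hcomp r).2 (hr ▸ hβO), hr.symm⟩
  have ha' : a * a⁻¹ = 1 := mul_inv_cancel₀ hane
  have hϖne : ϖ ≠ 0 := fun h => hϖ.ne_zero (Subtype.ext h)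
  have haOx : a ∈ Ox o := ⟨hao, a⁻¹, hau, ha'⟩
  have haiOx : a⁻¹ ∈ Ox o := ⟨hau, a, hao, inv_mul_cancel₀ hane⟩
  have hβ1 : repE F β 0 1 = β := by simp [repE]
  -- the explicit matrix of ι₀
  have hiota : ∀ s t : F, ι₀ (repE F β s t) = !![s + t*b, t; -(t*a), s] := by
    intro s t
    set M := ι₀ (repE F β s t) with hM
    have h1 := hι₀ (repE F β s t) 1
    have h0 := hι₀ (repE F β s t) 0
    simp only [Fin.sum_univ_two, Matrix.cons_val_zero, Matrix.cons_val_one,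
      Matrix.head_cons, mul_one, one_mul] at h1 h0
    rw [← hM] at h1 h0
    have e1 : repE F β s t = repE F β (M 1 1) (M 0 1) := by
      rw [h1]; unfold repE; ring
    have hmul := rep_mul β a b hmin s t 0 1
    rw [hβ1] at hmul
    have e0 : repE F β (-(t*a)) (s + t*b) = repE F β (M 1 0) (M 0 0) :=
      calc repE F β (-(t*a)) (s + t*b)
          = repE F β (s*0 - a*t*1) (s*1 + 0*t + b*t*1) := rep_congr β (by ring) (by ring)
        _ = repE F β s t * β := hmul.symm
        _ = repE F β (M 1 0) (M 0 0) := by rw [h0]; unfold repE; ring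
    obtain ⟨e11, e01⟩ := rep_inj β hβr e1
    obtain ⟨e10, e00⟩ := rep_inj β hβr e0
    rw [Matrix.eta_fin_two M, ← e00, ← e01, ← e10, ← e11]
  -- membership of ι₀-matrix entries
  have hiotamem : ∀ {s t : F}, s ∈ o → t ∈ o → ∀ i j, ι₀ (repE F β s t) i j ∈ o := by
    intro s t hs ht i j
    rw [hiota s t]
    fin_cases i <;> fin_cases j <;> simp <;>
      first
        | exact add_mem hs (mul_mem ht hbo)
        | exact ht
        | exact neg_mem (mul_mem ht hao)
        | exact mul_mem ht hao
        | exact hs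
  -- ι₀ maps units of O into GLo
  have hiotaGL : ∀ z ∈ Ox O, ι₀ z ∈ GLo o := by
    rintro z ⟨hzO, w, hwO, hzw⟩
    obtain ⟨s, t, hs, ht, hz⟩ := hOgen z hzO
    obtain ⟨p, q, hp, hq, hw⟩ := hOgen w hwO
    have hz' : z = repE F β s t := hz
    have hw' : w = repE F β p q := hw
    refine ⟨by rw [hz']; exact hiotamem hs ht, ι₀ w, by rw [hw']; exact hiotamem hp hq, ?_, ?_⟩
    · rw [← map_mul, hzw, map_one]
    · rw [← map_mul, mul_comm, hzw, map_one]
  -- inverse of a unit is a unit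
  have hOxinv : ∀ {z w : E}, z ∈ Ox O → w ∈ O → z * w = 1 → w ∈ Ox O := by
    rintro z w hz hw hzw
    exact ⟨hw, z, hz.1, by rw [mul_comm]; exact hzw⟩
  -- first coset: construction
  have main1 : ∀ g ∈ GLo o,
      (∃ m ∈ o, NfF a b (g 1 1) (-(g 1 0 * a⁻¹)) * m = 1) →
      ∃ k ∈ K0 o ϖ c, ∃ t' ∈ Ox O, g = k * ι₀ t' := by
    rintro g hg ⟨m, hm, hNm⟩
    set x := g 1 0 with hx
    set y := g 1 1 with hy
    have hxo : x ∈ o := hg.1 1 0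
    have hyo : y ∈ o := hg.1 1 1
    have hTo : -(x * a⁻¹) ∈ o := neg_mem (mul_mem hxo hau)
    have hNmem : NfF a b y (-(x * a⁻¹)) ∈ o := NfF_mem o hao hbo hyo hTo
    have hzOx : repE F β y (-(x * a⁻¹)) ∈ Ox O :=
      crit_of β a b o O hcomp hOgen hβr hβO hbo hmin hm hNmem hNm
    obtain ⟨hzO, w, hwO, hzw0⟩ := hzOx
    have hwOx : w ∈ Ox O := hOxinv ⟨hzO, w, hwO, hzw0⟩ hwO hzw0
    obtain ⟨p, q, hp, hq, hw⟩ := hOgen w hwO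
    have hw' : w = repE F β p q := hw
    have hzw : repE F β (y*p - a*(-(x * a⁻¹))*q) (y*q + p*(-(x * a⁻¹)) + b*(-(x * a⁻¹))*q)
        = repE F β 1 0 := by
      rw [← rep_mul β a b hmin, ← hw', hzw0]; simp [repE]
    obtain ⟨C1, C2⟩ := rep_inj β hβr hzw
    -- the candidate k
    have hwGL : ι₀ w ∈ GLo o := hiotaGL w hwOx
    have hkGL : g * ι₀ w ∈ GLo o := GLo_mul o hg hwGL
    have hk10 : (g * ι₀ w) 1 0 = 0 := by
      rw [mul_entry, hw', hiota p q]
      show x * (p + q*b) + y * -(q*a) = 0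
      linear_combination (-a) * C2 - (p*x + b*x*q) * ha'
    refine ⟨g * ι₀ w, ⟨hkGL, 0, o.zero_mem, by rw [hk10, mul_zero]⟩,
      repE F β y (-(x * a⁻¹)), ⟨hzO, w, hwO, hzw0⟩, ?_⟩
    rw [mul_assoc, ← map_mul, mul_comm w, hzw0, map_one, mul_one]
  -- units of o map to units of O
  have halgOx : ∀ {u : F}, u ∈ Ox o → algebraMap F E u ∈ Ox O := by
    rintro u ⟨hu, v, hv, huv⟩
    exact ⟨(hcomp u).1 hu, algebraMap F E v, (hcomp v).1 hv, by rw [← map_mul, huv, map_one]⟩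
  -- ϖ^c = ϖ * ϖ^(c-1)
  have hpowc : ϖ ^ c = ϖ * ϖ ^ (c - 1) := by
    conv_lhs => rw [show c = (c-1) + 1 from (Nat.succ_pred_eq_of_pos hc).symm]
    rw [pow_succ]; ring
  -- K0 entries: the (1,1) entry is a unit
  have hK0unit : ∀ k ∈ K0 o ϖ c, k 1 1 ∈ Ox o := by
    rintro k ⟨hkGL, dk, hdk, hk10⟩
    have hdet := GLo_det o hkGL
    by_contra h
    have h1 : k 0 0 * k 1 1 ∉ Ox o :=
      fun hu => h (Ox_of_mul_right o (hkGL.1 0 0) (hkGL.1 1 1) hu)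
    have h2 : k 0 1 * k 1 0 ∉ Ox o := by
      rw [hk10, hpowc, show k 0 1 * (ϖ * ϖ^(c-1) * dk) = ϖ * (k 0 1 * ϖ^(c-1) * dk) from
        by ring]
      exact pmul_not_unit o hϖo hϖ (mul_mem (mul_mem (hkGL.1 0 1) (pow_mem hϖo _)) hdk)
    exact nonunit_sub o (mul_mem (hkGL.1 0 0) (hkGL.1 1 1))
      (mul_mem (hkGL.1 0 1) (hkGL.1 1 0)) h1 h2 hdet
  -- first coset: characterisation
  have main2 : ∀ g : Matrix (Fin 2) (Fin 2) F,
      (∃ k ∈ K0 o ϖ c, ∃ t' ∈ Ox O, g = k * ι₀ t') →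
      g ∈ GLo o ∧ NfF a b (g 1 1) (-(g 1 0 * a⁻¹)) ∈ Ox o := by
    rintro g ⟨k, hk, t', ht', rfl⟩
    obtain ⟨p, q, hp, hq, hw⟩ := hOgen t' ht'.1
    have hw' : t' = repE F β p q := hw
    obtain ⟨-, -, m, hm, hNm⟩ := crit_to β a b o O hOgen hβr hao hbo hmin (hw' ▸ ht')
    have hgGL : k * ι₀ t' ∈ GLo o := GLo_mul o hk.1 (hiotaGL t' ht')
    refine ⟨hgGL, ?_⟩
    have hg10 : (k * ι₀ t') 1 0 = k 1 0 * (p + q*b) + k 1 1 * -(q*a) := by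
      rw [mul_entry, hw', hiota p q]; rfl
    have hg11 : (k * ι₀ t') 1 1 = k 1 0 * q + k 1 1 * p := by
      rw [mul_entry, hw', hiota p q]; rfl
    rw [hg10, hg11]
    have hid : NfF a b (k 1 0 * q + k 1 1 * p)
        (-((k 1 0 * (p + q*b) + k 1 1 * -(q*a)) * a⁻¹)) =
        NfF a b (k 1 1) (-(k 1 0 * a⁻¹)) * NfF a b p q := by
      rw [show k 1 0 * q + k 1 1 * p = k 1 0 * q + (k 1 1) * p from rfl,
        show -((k 1 0 * (p + q*b) + k 1 1 * -(q*a)) * a⁻¹)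
          = -((k 1 0 * (p + q*b) - (k 1 1) * q * a) * a⁻¹) from by ring]
      exact NfF_mul' a b (k 1 0) (k 1 1) p q hane
    rw [hid]
    refine Ox_mul o ?_ ⟨NfF_mem o hao hbo hp hq, m, hm, hNm⟩
    -- k11 unit, k10 in p: the norm is a unit
    obtain ⟨dk, hdk, hk10⟩ := hk.2
    have hY : k 1 1 ∈ Ox o := hK0unit k hk
    have hsplit : NfF a b (k 1 1) (-(k 1 0 * a⁻¹)) =
        k 1 1 * k 1 1 + ϖ * (ϖ^(c-1) * dk *
          (a * (ϖ^c * dk) * a⁻¹ * a⁻¹ - b * (k 1 1) * a⁻¹)) := by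
      rw [hk10, hpowc]; unfold NfF; ring
    rw [hsplit]
    have hwmem : ϖ^(c-1) * dk * (a * (ϖ^c * dk) * a⁻¹ * a⁻¹ - b * (k 1 1) * a⁻¹) ∈ o :=
      mul_mem (mul_mem (pow_mem hϖo _) hdk)
        (sub_mem (mul_mem (mul_mem (mul_mem hao (mul_mem (pow_mem hϖo _) hdk)) hau) hau)
          (mul_mem (mul_mem hbo (hk.1.1 1 1)) hau))
    exact unit_add_nonunit o (Ox_mul o hY hY) (mul_mem hϖo hwmem) (pmul_not_unit o hϖo hϖ hwmem)
  -- a row of a GLo matrix has a unit entry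
  have hrow : ∀ g ∈ GLo o, g 1 0 ∈ Ox o ∨ g 1 1 ∈ Ox o := by
    intro g hg
    by_contra h
    push_neg at h
    have hdet := GLo_det o hg
    have h1 : g 0 0 * g 1 1 ∉ Ox o :=
      fun hu => h.2 (Ox_of_mul_right o (hg.1 0 0) (hg.1 1 1) hu)
    have h2 : g 0 1 * g 1 0 ∉ Ox o :=
      fun hu => h.1 (Ox_of_mul_right o (hg.1 0 1) (hg.1 1 0) hu)
    exact nonunit_sub o (mul_mem (hg.1 0 0) (hg.1 1 1))
      (mul_mem (hg.1 0 1) (hg.1 1 0)) h1 h2 hdet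
  -- if the norm of the row is not a unit, then the row entries are linked to 𝒫
  have hznonunit : ∀ g ∈ GLo o, NfF a b (g 1 1) (-(g 1 0 * a⁻¹)) ∉ Ox o →
      repE F β (g 1 1) (-(g 1 0 * a⁻¹)) ∉ Ox O := by
    intro g hg hN hOx
    obtain ⟨-, -, m, hm, hNm⟩ := crit_to β a b o O hOgen hβr hao hbo hmin hOx
    exact hN ⟨NfF_mem o hao hbo (hg.1 1 1) (neg_mem (mul_mem (hg.1 1 0) hau)), m, hm, hNm⟩
  -- scalar multiplication of reps
  have hrepscal : ∀ u s t : F, algebraMap F E u * repE F β s t = repE F β (u*s) (u*t) := by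
    intro u s t
    rw [show algebraMap F E u = repE F β u 0 from by simp [repE], rep_mul β a b hmin]
    exact rep_congr β (by ring) (by ring)
  -- unramified dichotomy
  have dichU : Irreducible (⟨algebraMap F E ϖ, (hcomp ϖ).1 hϖo⟩ : O) →
      ∀ g ∈ GLo o, NfF a b (g 1 1) (-(g 1 0 * a⁻¹)) ∈ Ox o := by
    intro hirr g hg
    by_contra hN
    have hz := hznonunit g hg hN
    have hzO : repE F β (g 1 1) (-(g 1 0 * a⁻¹)) ∈ O := by
      refine add_mem ((hcomp _).1 (hg.1 1 1)) (mul_mem ((hcomp _).1 ?_) hβO)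
      exact neg_mem (mul_mem (hg.1 1 0) hau)
    obtain ⟨w, hwO, hzw⟩ := nonunit_dvd O ((hcomp ϖ).1 hϖo) hirr hzO hz
    obtain ⟨p', q', hp', hq', hwpq⟩ := hOgen w hwO
    rw [show w = repE F β p' q' from hwpq, hrepscal] at hzw
    obtain ⟨h1, h2⟩ := rep_inj β hβr hzw
    have hynu : g 1 1 ∉ Ox o := by
      rw [h1]; exact pmul_not_unit o hϖo hϖ hp'
    have hxnu : g 1 0 ∉ Ox o := by
      have hxval : g 1 0 = ϖ * (-(q' * a)) := by
        linear_combination (-a) * h2 - (g 1 0) * ha'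
      rw [hxval]; exact pmul_not_unit o hϖo hϖ (neg_mem (mul_mem hq' hao))
    rcases hrow g hg with h | h
    exacts [hxnu h, hynu h]
  refine ⟨?_, ?_⟩
  · -- unramified case
    intro hirr g
    constructor
    · intro hg
      obtain ⟨-, m, hm, hNm⟩ := dichU hirr g hg
      exact main1 g hg ⟨m, hm, hNm⟩
    · intro h
      exact (main2 g h).1
  · -- ramified case
    intro ϖE hϖE hAss u₀ hu₀o hu₀i hu₀ne hz₀pair hdF hdF2
    obtain ⟨d, hdo, hdeq⟩ := hdF
    have hdOx : d ∈ Ox o := by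
      by_contra hdn
      obtain ⟨d₂, hd₂, he⟩ := nonunit_dvd o hϖo hϖ hdo hdn
      exact hdF2 ⟨d₂, hd₂, by rw [hdeq, he]; ring⟩
    obtain ⟨hdo', dinv, hdinv, hddinv⟩ := hdOx
    have hdne : d ≠ 0 := fun h => by
      rw [h, zero_mul] at hddinv; exact zero_ne_one hddinv
    -- second coset implies the norm is ϖ times an integer
    have main4 : ∀ g : Matrix (Fin 2) (Fin 2) F,
        (∃ k ∈ K0 o ϖ c, ∃ t' ∈ Ox O, g = k * nmM u₀ * ι₀ t') →
        g ∈ GLo o ∧ ∃ r ∈ o, NfF a b (g 1 1) (-(g 1 0 * a⁻¹)) = ϖ * r := by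
      rintro g ⟨k, hk, t', ht', rfl⟩
      obtain ⟨p, q, hp, hq, hw⟩ := hOgen t' ht'.1
      have hw' : t' = repE F β p q := hw
      obtain ⟨-, -, m, hm, hNm⟩ := crit_to β a b o O hOgen hβr hao hbo hmin (hw' ▸ ht')
      have hnm : nmM u₀ ∈ GLo o := nmM_GLo o hu₀o
      have hgGL : k * nmM u₀ * ι₀ t' ∈ GLo o :=
        GLo_mul o (GLo_mul o hk.1 hnm) (hiotaGL t' ht')
      refine ⟨hgGL, ?_⟩
      obtain ⟨dk, hdk, hk10⟩ := hk.2
      have hX'0 : (k * nmM u₀) 1 0 = k 1 0 + k 1 1 * u₀ := by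
        rw [mul_entry]; simp [nmM]
      have hX'1 : (k * nmM u₀) 1 1 = k 1 1 := by
        rw [mul_entry]; simp [nmM]
      have hg10 : (k * nmM u₀ * ι₀ t') 1 0
          = (k 1 0 + k 1 1 * u₀) * (p + q*b) + k 1 1 * -(q*a) := by
        rw [mul_entry, hw', hiota p q, hX'0, hX'1]; rfl
      have hg11 : (k * nmM u₀ * ι₀ t') 1 1 = (k 1 0 + k 1 1 * u₀) * q + k 1 1 * p := by
        rw [mul_entry, hw', hiota p q, hX'0, hX'1]; rfl
      rw [hg10, hg11]
      have hid : NfF a b ((k 1 0 + k 1 1 * u₀) * q + k 1 1 * p)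
          (-(((k 1 0 + k 1 1 * u₀) * (p + q*b) + k 1 1 * -(q*a)) * a⁻¹)) =
          NfF a b (k 1 1) (-((k 1 0 + k 1 1 * u₀) * a⁻¹)) * NfF a b p q := by
        rw [show -(((k 1 0 + k 1 1 * u₀) * (p + q*b) + k 1 1 * -(q*a)) * a⁻¹)
            = -(((k 1 0 + k 1 1 * u₀) * (p + q*b) - (k 1 1) * q * a) * a⁻¹) from by ring]
        exact NfF_mul' a b (k 1 0 + k 1 1 * u₀) (k 1 1) p q hane
      rw [hid]
      -- first factor is ϖ times an integer
      have key0 : a * NfF a b (k 1 1) (-((k 1 0 + k 1 1 * u₀) * a⁻¹)) =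
          ϖ * (k 1 1 * k 1 1 * d
            + ϖ^(c-1) * dk * (ϖ*ϖ^(c-1)*dk + 2*u₀*(k 1 1) - b*(k 1 1))) := by
        rw [hk10, hpowc]
        unfold NfF
        linear_combination ((k 1 1)^2) * hdeq +
          (-(b*(k 1 1)*(ϖ*ϖ^(c-1)*dk + k 1 1 * u₀)) +
            (ϖ*ϖ^(c-1)*dk + k 1 1 * u₀)^2*(a*a⁻¹+1)) * ha'
      have key : NfF a b (k 1 1) (-((k 1 0 + k 1 1 * u₀) * a⁻¹)) =
          ϖ * ((k 1 1 * k 1 1 * d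
            + ϖ^(c-1) * dk * (ϖ*ϖ^(c-1)*dk + 2*u₀*(k 1 1) - b*(k 1 1))) * a⁻¹) := by
        nth_rewrite 1 [show NfF a b (k 1 1) (-((k 1 0 + k 1 1 * u₀) * a⁻¹))
          = a⁻¹ * (a * NfF a b (k 1 1) (-((k 1 0 + k 1 1 * u₀) * a⁻¹)))
            + NfF a b (k 1 1) (-((k 1 0 + k 1 1 * u₀) * a⁻¹)) * (1 - a * a⁻¹) from by ring]
        rw [key0, ha']
        ring
      rw [key]
      have hSmem : (k 1 1 * k 1 1 * d
          + ϖ^(c-1) * dk * (ϖ*ϖ^(c-1)*dk + 2*u₀*(k 1 1) - b*(k 1 1))) ∈ o := by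
        refine add_mem (mul_mem (mul_mem (hk.1.1 1 1) (hk.1.1 1 1)) hdo) ?_
        refine mul_mem (mul_mem (pow_mem hϖo _) hdk) ?_
        refine sub_mem (add_mem (mul_mem (mul_mem hϖo (pow_mem hϖo _)) hdk) ?_)
          (mul_mem hbo (hk.1.1 1 1))
        exact mul_mem (mul_mem (by rw [show (2:F) = 1+1 from by norm_num]; exact add_mem o.one_mem o.one_mem : (2:F) ∈ o) hu₀o) (hk.1.1 1 1)
      exact ⟨(k 1 1 * k 1 1 * d
          + ϖ^(c-1) * dk * (ϖ*ϖ^(c-1)*dk + 2*u₀*(k 1 1) - b*(k 1 1))) * a⁻¹ * NfF a b p q,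
        mul_mem (mul_mem hSmem hau) (NfF_mem o hao hbo hp hq), by ring⟩
    -- data from the ramified hypothesis
    set π : E := (ϖE : E) with hπdef
    have hπO : π ∈ O := ϖE.2
    have hπirr : Irreducible (⟨π, hπO⟩ : O) := hϖE
    have hπne : π ≠ 0 := fun h => hϖE.ne_zero (Subtype.ext h)
    obtain ⟨u, hu⟩ := hAss
    set v : E := ((u : O) : E) with hvdef
    set vinv : E := (((u⁻¹ : Oˣ) : O) : E) with hvinvdef
    have hvO : v ∈ O := ((u : O) : O).2
    have hvinvO : vinv ∈ O := (((u⁻¹ : Oˣ) : O)).2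
    have huval : algebraMap F E ϖ * v = π^2 := by
      have := congrArg (Subtype.val) hu
      push_cast at this
      exact this
    have hvv : v * vinv = 1 := by
      have h := congrArg (Subtype.val) u.mul_inv
      push_cast at h
      exact h
    have hϖval : algebraMap F E ϖ = π^2 * vinv := by
      rw [← huval, mul_assoc, hvv, mul_one]
    -- the element β - u₀ and its conjugate are uniformizers
    have hz₀O : β - algebraMap F E u₀ ∈ O := hz₀pair.1
    have hz₀nuOx : β - algebraMap F E u₀ ∉ Ox O :=
      fun ⟨_, w, hw, hzw⟩ => hz₀pair.2 ⟨w, hw, hzw⟩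
    have hz₀rep : β - algebraMap F E u₀ = repE F β (-u₀) 1 := by
      unfold repE; rw [map_neg, map_one]; ring
    have hNz₀ : NfF a b (-u₀) 1 = ϖ * d := by
      unfold NfF; linear_combination hdeq
    have hz₀cO : repE F β (-u₀ + 1*b) (-1) ∈ O :=
      add_mem ((hcomp _).1 (add_mem (neg_mem hu₀o) (by simpa using hbo)))
        (mul_mem ((hcomp _).1 (neg_mem o.one_mem)) hβO)
    have hz₀cnu : repE F β (-u₀ + 1*b) (-1) ∉ Ox O := by
      intro h
      obtain ⟨-, -, m, hm, hNm⟩ := crit_to β a b o O hOgen hβr hao hbo hmin h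
      rw [NfF_conj, hNz₀] at hNm
      exact pmul_not_unit o hϖo hϖ hdo ⟨mul_mem hϖo hdo, m, hm, hNm⟩
    obtain ⟨A, hAO, hz₀fac⟩ := nonunit_dvd O hπO hπirr hz₀O hz₀nuOx
    obtain ⟨A', hA'O, hz₀cfac⟩ := nonunit_dvd O hπO hπirr hz₀cO hz₀cnu
    have hprod : (β - algebraMap F E u₀) * repE F β (-u₀ + 1*b) (-1)
        = algebraMap F E (ϖ*d) := by
      rw [hz₀rep, rep_norm β a b hmin, hNz₀]
    have h1 : π^2 * (A*A') = π^2 * (vinv * algebraMap F E d) := by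
      rw [show π^2*(A*A') = (π*A)*(π*A') from by ring, ← hz₀fac, ← hz₀cfac, hprod,
        map_mul, hϖval]
      ring
    have hAA' : A * A' = vinv * algebraMap F E d :=
      mul_left_cancel₀ (pow_ne_zero 2 hπne) h1
    have hprodinv : (vinv * algebraMap F E d) * (v * algebraMap F E dinv) = 1 := by
      rw [show (vinv * algebraMap F E d) * (v * algebraMap F E dinv)
        = (v * vinv) * (algebraMap F E d * algebraMap F E dinv) from by ring,
        hvv, ← map_mul, hddinv, map_one, one_mul]
    have hAOx : A ∈ Ox O :=
      ⟨hAO, A' * (v * algebraMap F E dinv),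
        mul_mem hA'O (mul_mem hvO ((hcomp _).1 hdinv)),
        by rw [← mul_assoc, hAA', hprodinv]⟩
    have hA'Ox : A' ∈ Ox O :=
      ⟨hA'O, A * (v * algebraMap F E dinv),
        mul_mem hAO (mul_mem hvO ((hcomp _).1 hdinv)),
        by rw [show A' * (A * (v * algebraMap F E dinv))
          = (A * A') * (v * algebraMap F E dinv) from by ring, hAA', hprodinv]⟩
    -- the ramified dichotomy
    have dichR : ∀ g ∈ GLo o, NfF a b (g 1 1) (-(g 1 0 * a⁻¹)) ∉ Ox o →
        ∃ e ∈ Ox o, a * NfF a b (g 1 1) (-(g 1 0 * a⁻¹)) = ϖ * e := by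
      intro g hg hN
      set x := g 1 0 with hxdef
      set y := g 1 1 with hydef
      have hxo : x ∈ o := hg.1 1 0
      have hyo : y ∈ o := hg.1 1 1
      have hTo : -(x * a⁻¹) ∈ o := neg_mem (mul_mem hxo hau)
      have hNmem : NfF a b y (-(x * a⁻¹)) ∈ o := NfF_mem o hao hbo hyo hTo
      have hQnu : a * NfF a b y (-(x * a⁻¹)) ∉ Ox o :=
        fun h => hN (Ox_of_mul_right o hao hNmem h)
      obtain ⟨e, heo, hQe⟩ := nonunit_dvd o hϖo hϖ (mul_mem hao hNmem) hQnu
      refine ⟨e, ?_, hQe⟩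
      by_contra henu
      obtain ⟨e₂, he₂, hee₂⟩ := nonunit_dvd o hϖo hϖ heo henu
      -- z and its conjugate
      have hzO : repE F β y (-(x * a⁻¹)) ∈ O :=
        add_mem ((hcomp _).1 hyo) (mul_mem ((hcomp _).1 hTo) hβO)
      have hznu : repE F β y (-(x * a⁻¹)) ∉ Ox O := hznonunit g hg hN
      -- x is a unit
      have hrdec : algebraMap F E (y + -(x * a⁻¹)*u₀) = repE F β y (-(x * a⁻¹))
          - algebraMap F E (-(x * a⁻¹)) * (β - algebraMap F E u₀) := by
        unfold repE; rw [map_add, map_mul]; ring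
      have hrnuE : algebraMap F E (y + -(x * a⁻¹)*u₀) ∉ Ox O := by
        rw [hrdec]
        refine nonunit_sub O hzO (mul_mem ((hcomp _).1 hTo) hz₀O) hznu ?_
        exact fun h => hz₀nuOx (Ox_of_mul_right O ((hcomp _).1 hTo) hz₀O h)
      have hrnu : y + -(x * a⁻¹)*u₀ ∉ Ox o := by
        rintro ⟨hr, mm, hmm, hrm⟩
        exact hrnuE ⟨(hcomp _).1 hr, algebraMap F E mm, (hcomp _).1 hmm,
          by rw [← map_mul, hrm, map_one]⟩
      have hro : y + -(x * a⁻¹)*u₀ ∈ o := add_mem hyo (mul_mem hTo hu₀o)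
      obtain ⟨r₁, hr₁, hrfac⟩ := nonunit_dvd o hϖo hϖ hro hrnu
      have hxOx : x ∈ Ox o := by
        by_contra hxnu
        obtain ⟨x₁, hx₁, hxfac⟩ := nonunit_dvd o hϖo hϖ hxo hxnu
        have hynu : y ∉ Ox o := by
          rw [show y = ϖ * (r₁ + x₁ * a⁻¹ * u₀) from by
            linear_combination hrfac + a⁻¹*u₀*hxfac]
          exact pmul_not_unit o hϖo hϖ (add_mem hr₁ (mul_mem (mul_mem hx₁ hau) hu₀o))
        rcases hrow g hg with h | h
        exacts [hxnu h, hynu h]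
      have hTOx : -(x * a⁻¹) ∈ Ox o := Ox_neg o (Ox_mul o hxOx haiOx)
      -- z is π times a unit
      have hzfac : repE F β y (-(x * a⁻¹)) = π * (algebraMap F E (-(x * a⁻¹)) * A
          + π * (vinv * algebraMap F E r₁)) := by
        have h2 : repE F β y (-(x * a⁻¹)) = algebraMap F E (-(x * a⁻¹)) *
            (β - algebraMap F E u₀) + algebraMap F E (y + -(x * a⁻¹)*u₀) := by
          rw [hrdec]; ring
        rw [h2, hz₀fac, hrfac, map_mul, hϖval]; ring
      have hUOx : algebraMap F E (-(x * a⁻¹)) * A + π * (vinv * algebraMap F E r₁) ∈ Ox O :=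
        unit_add_nonunit O (Ox_mul O (halgOx hTOx) hAOx)
          (mul_mem hπO (mul_mem hvinvO ((hcomp _).1 hr₁)))
          (pmul_not_unit O hπO hπirr (mul_mem hvinvO ((hcomp _).1 hr₁)))
      -- the conjugate z' is also π times a unit
      have hz'O : repE F β (y + -(x * a⁻¹)*b) (-(-(x * a⁻¹))) ∈ O :=
        add_mem ((hcomp _).1 (add_mem hyo (mul_mem hTo hbo)))
          (mul_mem ((hcomp _).1 (neg_mem hTo)) hβO)
      have hz'nu : repE F β (y + -(x * a⁻¹)*b) (-(-(x * a⁻¹))) ∉ Ox O := by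
        intro h
        obtain ⟨-, -, m, hm, hNm⟩ := crit_to β a b o O hOgen hβr hao hbo hmin h
        rw [NfF_conj] at hNm
        exact hN ⟨hNmem, m, hm, hNm⟩
      have hr'dec : algebraMap F E (y + -(x * a⁻¹)*b - -(x * a⁻¹)*u₀)
          = repE F β (y + -(x * a⁻¹)*b) (-(-(x * a⁻¹)))
            - algebraMap F E (-(-(x * a⁻¹))) * (β - algebraMap F E u₀) := by
        unfold repE; simp only [map_sub, map_add, map_mul, map_neg]; ring
      have hr'nuE : algebraMap F E (y + -(x * a⁻¹)*b - -(x * a⁻¹)*u₀) ∉ Ox O := by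
        rw [hr'dec]
        refine nonunit_sub O hz'O (mul_mem ((hcomp _).1 (neg_mem hTo)) hz₀O) hz'nu ?_
        exact fun h => hz₀nuOx (Ox_of_mul_right O ((hcomp _).1 (neg_mem hTo)) hz₀O h)
      have hr'nu : y + -(x * a⁻¹)*b - -(x * a⁻¹)*u₀ ∉ Ox o := by
        rintro ⟨hr, mm, hmm, hrm⟩
        exact hr'nuE ⟨(hcomp _).1 hr, algebraMap F E mm, (hcomp _).1 hmm,
          by rw [← map_mul, hrm, map_one]⟩
      have hr'o : y + -(x * a⁻¹)*b - -(x * a⁻¹)*u₀ ∈ o :=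
        sub_mem (add_mem hyo (mul_mem hTo hbo)) (mul_mem hTo hu₀o)
      obtain ⟨r₁', hr₁', hr'fac⟩ := nonunit_dvd o hϖo hϖ hr'o hr'nu
      have hz'fac : repE F β (y + -(x * a⁻¹)*b) (-(-(x * a⁻¹)))
          = π * (algebraMap F E (-(-(x * a⁻¹))) * A + π * (vinv * algebraMap F E r₁')) := by
        have h2 : repE F β (y + -(x * a⁻¹)*b) (-(-(x * a⁻¹)))
            = algebraMap F E (-(-(x * a⁻¹))) * (β - algebraMap F E u₀)
              + algebraMap F E (y + -(x * a⁻¹)*b - -(x * a⁻¹)*u₀) := by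
          rw [hr'dec]; ring
        rw [h2, hz₀fac, hr'fac, map_mul, hϖval]; ring
      have hU'Ox : algebraMap F E (-(-(x * a⁻¹))) * A + π * (vinv * algebraMap F E r₁')
          ∈ Ox O :=
        unit_add_nonunit O (Ox_mul O (halgOx (Ox_neg o hTOx)) hAOx)
          (mul_mem hπO (mul_mem hvinvO ((hcomp _).1 hr₁')))
          (pmul_not_unit O hπO hπirr (mul_mem hvinvO ((hcomp _).1 hr₁')))
      -- contradiction
      have hnval : repE F β y (-(x * a⁻¹)) * repE F β (y + -(x * a⁻¹)*b) (-(-(x * a⁻¹)))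
          = algebraMap F E (NfF a b y (-(x * a⁻¹))) := rep_norm β a b hmin y (-(x * a⁻¹))
      have hQform : NfF a b y (-(x * a⁻¹)) = a⁻¹ * (ϖ * (ϖ * e₂)) := by
        linear_combination a⁻¹*hQe + a⁻¹*ϖ*hee₂ - NfF a b y (-(x * a⁻¹)) * ha'
      have h3 : π^2 * ((algebraMap F E (-(x * a⁻¹)) * A + π * (vinv * algebraMap F E r₁))
          * (algebraMap F E (-(-(x * a⁻¹))) * A + π * (vinv * algebraMap F E r₁')))
          = π^2 * (π^2 * (algebraMap F E a⁻¹ * vinv * (vinv * algebraMap F E e₂))) := by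
        rw [show ∀ S S' : E, π^2 * (S * S') = (π*S)*(π*S') from fun S S' => by ring,
          ← hzfac, ← hz'fac, hnval, hQform, map_mul, map_mul, map_mul, hϖval]
        ring
      have h4 := mul_left_cancel₀ (pow_ne_zero 2 hπne) h3
      have h5 := Ox_mul O hUOx hU'Ox
      rw [h4, show π^2 * (algebraMap F E a⁻¹ * vinv * (vinv * algebraMap F E e₂))
        = π * (π * (algebraMap F E a⁻¹ * vinv * (vinv * algebraMap F E e₂))) from by
          ring] at h5
      exact pmul_not_unit O hπO hπirr
        (mul_mem hπO (mul_mem (mul_mem ((hcomp _).1 hau) hvinvO)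
          (mul_mem hvinvO ((hcomp _).1 he₂)))) h5
    have hϖdne : ϖ * d ≠ 0 := mul_ne_zero hϖne hdne
    have haNζ : a * NfF a b 1 (-(u₀*a⁻¹)) = ϖ * d := by
      unfold NfF
      linear_combination hdeq + (-(b*u₀) + u₀^2*(a*a⁻¹+1)) * ha'
    have main3 : ∀ g ∈ GLo o,
        (∃ e ∈ Ox o, a * NfF a b (g 1 1) (-(g 1 0 * a⁻¹)) = ϖ * e) →
        ∃ k ∈ K0 o ϖ c, ∃ t' ∈ Ox O, g = k * nmM u₀ * ι₀ t' := by
      rintro g hg ⟨e, ⟨heo, einv, heinv, heeinv⟩, hQe⟩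
      have hene : e ≠ 0 := fun h => by
        rw [h, zero_mul] at heeinv; exact zero_ne_one heeinv
      set x := g 1 0 with hxdef
      set y := g 1 1 with hydef
      have hxo : x ∈ o := hg.1 1 0
      have hyo : y ∈ o := hg.1 1 1
      have hTo : -(x * a⁻¹) ∈ o := neg_mem (mul_mem hxo hau)
      have hNmem : NfF a b y (-(x * a⁻¹)) ∈ o := NfF_mem o hao hbo hyo hTo
      -- the element t'
      set S0 : F := 1 + (-(u₀*a⁻¹))*b with hS0def
      set T0 : F := -(-(u₀*a⁻¹)) with hT0def
      set c₀ : F := (ϖ*d)⁻¹ * a with hc₀def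
      set A1 : F := S0*y - a*T0*(-(x * a⁻¹)) with hA1def
      set A2 : F := S0*(-(x * a⁻¹)) + y*T0 + b*T0*(-(x * a⁻¹)) with hA2def
      have hζconj : repE F β 1 (-(u₀*a⁻¹)) * repE F β S0 T0
          = algebraMap F E (NfF a b 1 (-(u₀*a⁻¹))) := rep_norm β a b hmin 1 (-(u₀*a⁻¹))
      have hstep1 : repE F β S0 T0 * repE F β y (-(x * a⁻¹)) = repE F β A1 A2 :=
        rep_mul β a b hmin S0 T0 y (-(x * a⁻¹))
      have hc₀Nζ : c₀ * NfF a b 1 (-(u₀*a⁻¹)) = 1 := by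
        rw [hc₀def, mul_assoc, haNζ, inv_mul_cancel₀ hϖdne]
      have hζt : repE F β 1 (-(u₀*a⁻¹)) * repE F β (c₀*A1) (c₀*A2)
          = repE F β y (-(x * a⁻¹)) :=
        calc repE F β 1 (-(u₀*a⁻¹)) * repE F β (c₀*A1) (c₀*A2)
            = (repE F β 1 (-(u₀*a⁻¹)) * repE F β S0 T0) *
              (algebraMap F E c₀ * repE F β y (-(x * a⁻¹))) := by
              rw [← hrepscal, ← hstep1]; ring
          _ = algebraMap F E (NfF a b 1 (-(u₀*a⁻¹))) *
              (algebraMap F E c₀ * repE F β y (-(x * a⁻¹))) := by rw [hζconj]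
          _ = repE F β y (-(x * a⁻¹)) := by
              rw [← mul_assoc, ← map_mul, mul_comm (NfF a b 1 (-(u₀*a⁻¹))) c₀,
                hc₀Nζ, map_one, one_mul]
      -- norm of t'
      have hN : NfF a b y (-(x * a⁻¹)) = a⁻¹ * (ϖ * e) := by
        linear_combination a⁻¹*hQe - NfF a b y (-(x * a⁻¹)) * ha'
      have hNζ : NfF a b 1 (-(u₀*a⁻¹)) = a⁻¹ * (ϖ * d) := by
        linear_combination a⁻¹*haNζ - NfF a b 1 (-(u₀*a⁻¹)) * ha'
      have hNt' : NfF a b (c₀*A1) (c₀*A2) = e * dinv := by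
        have h1 : NfF a b (c₀*A1) (c₀*A2) = c₀^2 * NfF a b A1 A2 := by
          unfold NfF; ring
        have h2 : NfF a b A1 A2 = NfF a b S0 T0 * NfF a b y (-(x * a⁻¹)) := by
          rw [hA1def, hA2def]; exact NfF_mul a b S0 T0 y (-(x * a⁻¹))
        have h3 : NfF a b S0 T0 = NfF a b 1 (-(u₀*a⁻¹)) := NfF_conj a b 1 (-(u₀*a⁻¹))
        rw [h1, h2, h3, hN, hNζ, hc₀def]
        field_simp
        linear_combination (-1) * hddinv
      have ht'Ox : repE F β (c₀*A1) (c₀*A2) ∈ Ox O := by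
        refine crit_of β a b o O hcomp hOgen hβr hβO hbo hmin (m := d*einv)
          (mul_mem hdo heinv) (by rw [hNt']; exact mul_mem heo hdinv) ?_
        rw [hNt', show e*dinv*(d*einv) = (e*einv)*(d*dinv) from by ring,
          heeinv, hddinv, mul_one]
      obtain ⟨ht'O, w, hwO, ht'w⟩ := ht'Ox
      have hwOx : w ∈ Ox O := hOxinv ⟨ht'O, w, hwO, ht'w⟩ hwO ht'w
      obtain ⟨p, q, hp, hq, hw⟩ := hOgen w hwO
      have hw' : w = repE F β p q := hw
      -- the key relations
      have hzw : repE F β (y*p - a*(-(x * a⁻¹))*q)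
          (y*q + p*(-(x * a⁻¹)) + b*(-(x * a⁻¹))*q) = repE F β 1 (-(u₀*a⁻¹)) := by
        rw [← rep_mul β a b hmin, ← hw', ← hζt, mul_assoc, ht'w, mul_one]
      obtain ⟨C1, C2⟩ := rep_inj β hβr hzw
      have r1 : x*q + y*p = 1 := by linear_combination C1 - x*q*ha'
      have r0 : x*(p+q*b) + y*(-(q*a)) = u₀ := by
        linear_combination (-a)*C2 - (p*x + b*x*q - u₀)*ha'
      -- the candidate k
      have hkGL : g * ι₀ w * nmM (-u₀) ∈ GLo o :=
        GLo_mul o (GLo_mul o hg (hiotaGL w hwOx)) (nmM_GLo o (neg_mem hu₀o))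
      have hrow0 : (g * ι₀ w) 1 0 = u₀ := by
        rw [mul_entry, hw', hiota p q]
        show x * (p + q*b) + y * -(q*a) = u₀
        exact r0
      have hrow1 : (g * ι₀ w) 1 1 = 1 := by
        rw [mul_entry, hw', hiota p q]
        show x * q + y * p = 1
        exact r1
      have hk10 : (g * ι₀ w * nmM (-u₀)) 1 0 = 0 := by
        rw [mul_entry, hrow0, hrow1]
        simp [nmM]
      refine ⟨g * ι₀ w * nmM (-u₀), ⟨hkGL, 0, o.zero_mem, by rw [hk10, mul_zero]⟩,
        repE F β (c₀*A1) (c₀*A2), ⟨ht'O, w, hwO, ht'w⟩, ?_⟩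
      rw [mul_assoc (g * ι₀ w), nmM_inv, mul_one, mul_assoc, ← map_mul,
        mul_comm w, ht'w, map_one, mul_one]
    refine ⟨?_, ?_⟩
    · intro g
      constructor
      · intro hg
        by_cases hcase : NfF a b (g 1 1) (-(g 1 0 * a⁻¹)) ∈ Ox o
        · obtain ⟨-, m, hm, hNm⟩ := hcase
          exact Or.inl (main1 g hg ⟨m, hm, hNm⟩)
        · exact Or.inr (main3 g hg (dichR g hg hcase))
      · rintro (h | h)
        · exact (main2 g h).1
        · exact (main4 g h).1
    · rw [Set.disjoint_left]
      rintro g h1 h2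
      have hu := (main2 g h1).2
      obtain ⟨-, r, hr, hNr⟩ := main4 g h2
      rw [hNr] at hu
      exact pmul_not_unit o hϖo hϖ hr hu
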